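/- With the notation of the previous statement, (T_1 ∘ T_2) ∘ σ ∘ (T_1^{-1} ∘ T_2^{-1}) = (T_1² ∘ T_2²) ∘ σ, where σ(z) = 1/z̄. -/

import Mathlib

open scoped Classical

open Complex

/-- The inner annulus `S'₂ = {z ∈ ℂ : 1/4 ≤ |z| ≤ 1/2}`. -/
def annulusInner : Set ℂ := {z : ℂ | 1/4 ≤ ‖z‖ ∧ ‖z‖ ≤ 1/2}

/-- The outer annulus `S''₂ = {z ∈ ℂ : 2 ≤ |z| ≤ 4}`. -/
def annulusOuter : Set ℂ := {z : ℂ | 2 ≤ ‖z‖ ∧ ‖z‖ ≤ 4}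

/-- The `k`-th power of the Dehn twist `T₁ z = e^{2πi(1 - 1/(2|z|))} z` of the inner
annulus, extended by the identity outside it. -/
noncomputable def twistInnerPow (k : ℤ) (z : ℂ) : ℂ :=
  if z ∈ annulusInner then
    Complex.exp (2 * Real.pi * I * (k : ℂ) * (1 - 1 / (2 * (‖z‖ : ℂ)))) * z
  else z

/-- The `l`-th power of the Dehn twist `T₂ z = e^{2πi(|z|/2 - 1)} z` of the outer
annulus, extended by the identity outside it. -/
noncomputable def twistOuterPow (l : ℤ) (z : ℂ) : ℂ :=
  if z ∈ annulusOuter then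
    Complex.exp (2 * Real.pi * I * (l : ℂ) * ((‖z‖ : ℂ) / 2 - 1)) * z
  else z

/-- The antiholomorphic involution `σ z = 1 / conj z`. -/
noncomputable def sigmaInv (z : ℂ) : ℂ := 1 / (starRingEnd ℂ) z

lemma mem_inner_iff (z : ℂ) : z ∈ annulusInner ↔ 1/4 ≤ ‖z‖ ∧ ‖z‖ ≤ 1/2 :=
  Iff.rfl

lemma mem_outer_iff (z : ℂ) : z ∈ annulusOuter ↔ 2 ≤ ‖z‖ ∧ ‖z‖ ≤ 4 :=
  Iff.rfl

lemma abs_sigmaInv (z : ℂ) : ‖sigmaInv z‖ = 1 / ‖z‖ := by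
  simp [sigmaInv, map_div₀]

lemma abs_exp_mul_I (t : ℝ) (z : ℂ) :
    ‖Complex.exp ((t : ℂ) * I) * z‖ = ‖z‖ := by
  rw [norm_mul, Complex.norm_exp_ofReal_mul_I, one_mul]

lemma sigmaInv_exp_mul (t : ℝ) (z : ℂ) :
    sigmaInv (Complex.exp ((t : ℂ) * I) * z) = Complex.exp ((t : ℂ) * I) * sigmaInv z := by
  unfold sigmaInv
  rw [map_mul]
  have h1 : (starRingEnd ℂ) (Complex.exp ((t : ℂ) * I)) = (Complex.exp ((t : ℂ) * I))⁻¹ := by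
    rw [← Complex.exp_conj, ← Complex.exp_neg]
    congr 1
    simp [Complex.conj_I]
  rw [h1, one_div, one_div, mul_inv, inv_inv]

lemma twistInner_eq (k : ℤ) (z : ℂ) (h : z ∈ annulusInner) :
    twistInnerPow k z
      = Complex.exp (((2 * Real.pi * k * (1 - 1 / (2 * ‖z‖)) : ℝ) : ℂ) * I) * z := by
  rw [twistInnerPow, if_pos h]
  congr 2
  push_cast
  ring

lemma twistInner_of_not (k : ℤ) (z : ℂ) (h : z ∉ annulusInner) : twistInnerPow k z = z :=
  if_neg h

lemma twistOuter_eq (l : ℤ) (z : ℂ) (h : z ∈ annulusOuter) :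
    twistOuterPow l z
      = Complex.exp (((2 * Real.pi * l * (‖z‖ / 2 - 1) : ℝ) : ℂ) * I) * z := by
  rw [twistOuterPow, if_pos h]
  congr 2
  push_cast
  ring

lemma twistOuter_of_not (l : ℤ) (z : ℂ) (h : z ∉ annulusOuter) : twistOuterPow l z = z :=
  if_neg h

/-- `(T₁ ∘ T₂) ∘ σ ∘ (T₁⁻¹ ∘ T₂⁻¹) = (T₁² ∘ T₂²) ∘ σ`. -/
theorem twist_sigma_conjugation (z : ℂ) (hz : z ≠ 0) :
    twistInnerPow 1 (twistOuterPow 1 (sigmaInv (twistInnerPow (-1) (twistOuterPow (-1) z)))) =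
      twistInnerPow 2 (twistOuterPow 2 (sigmaInv z)) := by
  have hr0 : 0 < ‖z‖ := norm_pos_iff.mpr hz
  set r := ‖z‖ with hrdef
  have hrr : 1 / r * r = 1 := by field_simp
  by_cases hO : z ∈ annulusOuter
  · -- 2 ≤ r ≤ 4
    obtain ⟨h2, h4⟩ := (mem_outer_iff z).mp hO
    have hsmem : sigmaInv z ∈ annulusInner := by
      rw [mem_inner_iff, abs_sigmaInv]
      constructor
      · rw [div_le_div_iff₀ (by norm_num) hr0]; linarith
      · rw [div_le_div_iff₀ hr0 (by norm_num)]; linarith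
    have hsabs : ‖sigmaInv z‖ = 1 / r := abs_sigmaInv z
    have step1 : twistOuterPow (-1) z
        = Complex.exp (((2 * Real.pi * (-1 : ℤ) * (r / 2 - 1) : ℝ) : ℂ) * I) * z :=
      twistOuter_eq (-1) z hO
    set t : ℝ := (2 * Real.pi * (-1 : ℤ) * (r / 2 - 1) : ℝ) with ht
    have habs1 : ‖Complex.exp ((t : ℂ) * I) * z‖ = r := by
      rw [abs_exp_mul_I]
    have step2 : twistInnerPow (-1) (Complex.exp ((t : ℂ) * I) * z)
        = Complex.exp ((t : ℂ) * I) * z := by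
      apply twistInner_of_not
      rw [mem_inner_iff, habs1]
      rintro ⟨-, hle⟩; linarith
    have step3 : sigmaInv (Complex.exp ((t : ℂ) * I) * z)
        = Complex.exp ((t : ℂ) * I) * sigmaInv z := sigmaInv_exp_mul t z
    have habs2 : ‖Complex.exp ((t : ℂ) * I) * sigmaInv z‖ = 1 / r := by
      rw [abs_exp_mul_I, hsabs]
    have step4 : twistOuterPow 1 (Complex.exp ((t : ℂ) * I) * sigmaInv z)
        = Complex.exp ((t : ℂ) * I) * sigmaInv z := by
      apply twistOuter_of_not
      rw [mem_outer_iff, habs2]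
      rintro ⟨h2', -⟩
      have : (1 : ℝ) / r ≤ 1 / 2 := by
        rw [div_le_div_iff₀ hr0 (by norm_num)]; linarith
      linarith
    have hmem2 : Complex.exp ((t : ℂ) * I) * sigmaInv z ∈ annulusInner := by
      rw [mem_inner_iff, habs2]
      rw [mem_inner_iff, hsabs] at hsmem
      exact hsmem
    have step5 := twistInner_eq 1 _ hmem2
    rw [habs2] at step5
    -- RHS
    have hsnotO : sigmaInv z ∉ annulusOuter := by
      rw [mem_outer_iff, hsabs]
      rintro ⟨h2', -⟩
      have : (1 : ℝ) / r ≤ 1 / 2 := by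
        rw [div_le_div_iff₀ hr0 (by norm_num)]; linarith
      linarith
    have rhs1 : twistOuterPow 2 (sigmaInv z) = sigmaInv z := twistOuter_of_not 2 _ hsnotO
    have rhs2 := twistInner_eq 2 (sigmaInv z) hsmem
    rw [hsabs] at rhs2
    rw [step1, step2, step3, step4, step5, rhs1, rhs2]
    rw [← mul_assoc, ← Complex.exp_add, ← add_mul, ← Complex.ofReal_add]
    have hrne : r ≠ 0 := ne_of_gt hr0
    congr 2
    rw [ht]
    push_cast
    field_simp
    ring
  · by_cases hI : z ∈ annulusInner
    · -- 1/4 ≤ r ≤ 1/2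
      obtain ⟨h14, h12⟩ := (mem_inner_iff z).mp hI
      have hsabs : ‖sigmaInv z‖ = 1 / r := abs_sigmaInv z
      have hsmem : sigmaInv z ∈ annulusOuter := by
        rw [mem_outer_iff, hsabs]
        constructor
        · rw [le_div_iff₀ hr0]; linarith
        · rw [div_le_iff₀ hr0]; linarith
      have step0 : twistOuterPow (-1) z = z := twistOuter_of_not (-1) z hO
      have step1 : twistInnerPow (-1) z
          = Complex.exp (((2 * Real.pi * (-1 : ℤ) * (1 - 1 / (2 * r)) : ℝ) : ℂ) * I) * z :=
        twistInner_eq (-1) z hI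
      set t : ℝ := (2 * Real.pi * (-1 : ℤ) * (1 - 1 / (2 * r)) : ℝ) with ht
      have step2 : sigmaInv (Complex.exp ((t : ℂ) * I) * z)
          = Complex.exp ((t : ℂ) * I) * sigmaInv z := sigmaInv_exp_mul t z
      have habs2 : ‖Complex.exp ((t : ℂ) * I) * sigmaInv z‖ = 1 / r := by
        rw [abs_exp_mul_I, hsabs]
      have hmem2 : Complex.exp ((t : ℂ) * I) * sigmaInv z ∈ annulusOuter := by
        rw [mem_outer_iff, habs2]
        rw [mem_outer_iff, hsabs] at hsmem
        exact hsmem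
      have step3 := twistOuter_eq 1 _ hmem2
      rw [habs2] at step3
      have habs3 : ‖
          (Complex.exp (((2 * Real.pi * (1 : ℤ) * (1 / r / 2 - 1) : ℝ) : ℂ) * I)
            * (Complex.exp ((t : ℂ) * I) * sigmaInv z))‖ = 1 / r := by
        rw [abs_exp_mul_I, habs2]
      have step4 : twistInnerPow 1
          (Complex.exp (((2 * Real.pi * (1 : ℤ) * (1 / r / 2 - 1) : ℝ) : ℂ) * I)
            * (Complex.exp ((t : ℂ) * I) * sigmaInv z))
          = Complex.exp (((2 * Real.pi * (1 : ℤ) * (1 / r / 2 - 1) : ℝ) : ℂ) * I)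
            * (Complex.exp ((t : ℂ) * I) * sigmaInv z) := by
        apply twistInner_of_not
        rw [mem_inner_iff, habs3]
        rintro ⟨-, hle⟩
        have : (2 : ℝ) ≤ 1 / r := by rw [le_div_iff₀ hr0]; linarith
        linarith
      have rhs1 := twistOuter_eq 2 (sigmaInv z) hsmem
      rw [hsabs] at rhs1
      have habs4 : ‖
          (Complex.exp (((2 * Real.pi * (2 : ℤ) * (1 / r / 2 - 1) : ℝ) : ℂ) * I) * sigmaInv z)‖
          = 1 / r := by rw [abs_exp_mul_I, hsabs]
      have rhs2 : twistInnerPow 2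
          (Complex.exp (((2 * Real.pi * (2 : ℤ) * (1 / r / 2 - 1) : ℝ) : ℂ) * I) * sigmaInv z)
          = Complex.exp (((2 * Real.pi * (2 : ℤ) * (1 / r / 2 - 1) : ℝ) : ℂ) * I) * sigmaInv z := by
        apply twistInner_of_not
        rw [mem_inner_iff, habs4]
        rintro ⟨-, hle⟩
        have : (2 : ℝ) ≤ 1 / r := by rw [le_div_iff₀ hr0]; linarith
        linarith
      rw [step0, step1, step2, step3, step4, rhs1, rhs2]
      rw [← mul_assoc, ← Complex.exp_add, ← add_mul, ← Complex.ofReal_add]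
      have hrne : r ≠ 0 := ne_of_gt hr0
      congr 2
      rw [ht]
      push_cast
      field_simp
      ring
    · -- neither
      have hsnotI : sigmaInv z ∉ annulusInner := by
        rw [mem_inner_iff, abs_sigmaInv]
        rintro ⟨h1, h2⟩
        apply hO
        rw [mem_outer_iff]
        constructor
        · nlinarith [hrr]
        · nlinarith [hrr]
      have hsnotO : sigmaInv z ∉ annulusOuter := by
        rw [mem_outer_iff, abs_sigmaInv]
        rintro ⟨h1, h2⟩
        apply hI
        rw [mem_inner_iff]
        constructor
        · nlinarith [hrr]
        · nlinarith [hrr]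
      rw [twistOuter_of_not (-1) z hO, twistInner_of_not (-1) z hI,
        twistOuter_of_not 1 _ hsnotO, twistInner_of_not 1 _ hsnotI,
        twistOuter_of_not 2 _ hsnotO, twistInner_of_not 2 _ hsnotI]
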